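/- If for all γ ∈ Π_k the transition rates ρ(k; k₁,...,k_r) of the induced unstructured process satisfy ρ(k; k₁,...,k_r) = Σ_{i=1}^r ρ(k+1; k₁,...,k_i+1,...,k_r) + ρ(k+1; k₁,...,k_r, 1) for all k ≥ 2 and all k₁,...,k_r ≥ 1 with Σk_i = k and max k_i ≥ 2, then these rates are the restriction of a consistent exchangeable coalescent family (Ξ-coalescent) in the sense of Schweinsberg's consistency criterion. -/

import Mathlib

open scoped Classical

/-- The projection of a partition (setoid) of `{1,…,n+1}` to a partition of `{1,…,n}`,
obtained by deleting the last element. -/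
def projS {n : ℕ} (s : Setoid (Fin (n + 1))) : Setoid (Fin n) :=
  Setoid.comap Fin.castSucc s

/-- Given partitions `ζ ≤ η` of `{1,…,n}` (`η` coarser than `ζ`), the merger profile
of the transition `ζ → η`: the multiset recording, for each block of `η`, the number of
blocks of `ζ` merged to form it. -/
noncomputable def mergeProfile {n : ℕ} (ζ η : Setoid (Fin n)) : Multiset ℕ :=
  ((Finset.univ.image fun x : Fin n => Quotient.mk η x).val).map
    fun C => Nat.card {c : Quotient ζ // Quotient.mk η (Quotient.out c) = C}

/-- The transition rate, among `P_n`, of the merger `ζ → η`, for a rate array `ρ`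
indexed by the number of blocks of `ζ` and the merger profile. -/
noncomputable def mergeRate (ρ : ℕ → Multiset ℕ → NNReal) {n : ℕ}
    (ζ η : Setoid (Fin n)) : NNReal :=
  if ζ ≤ η ∧ ζ ≠ η then ρ (Nat.card (Quotient ζ)) (mergeProfile ζ η) else 0

namespace ConsistencyAux

/-! ### Generic fiber-profile machinery -/

/-- The multiset of fiber sizes of a map `f : γ → δ`. -/
noncomputable def profileOf {γ δ : Type*} [Fintype δ] (f : γ → δ) : Multiset ℕ :=
  (Finset.univ.val : Multiset δ).map fun C => Nat.card {c : γ // f c = C}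

/-- The map on quotients induced by a coarsening of setoids. -/
def fmap {α : Type*} {ζ η : Setoid α} (h : ζ ≤ η) : Quotient ζ → Quotient η :=
  Quotient.map' id fun _ _ hab => Setoid.le_def.mp h hab

@[simp] lemma fmap_mk {α : Type*} {ζ η : Setoid α} (h : ζ ≤ η) (x : α) :
    fmap h (Quotient.mk ζ x) = Quotient.mk η x := rfl

lemma fmap_surjective {α : Type*} {ζ η : Setoid α} (h : ζ ≤ η) :
    Function.Surjective (fmap h) := by
  intro q
  obtain ⟨x, rfl⟩ := Quotient.mk_surjective q
  exact ⟨Quotient.mk ζ x, rfl⟩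

lemma profileOf_congr {γ γ' δ δ' : Type*} [Fintype δ] [Fintype δ']
    (f : γ → δ) (f' : γ' → δ') (e : γ ≃ γ') (e' : δ ≃ δ')
    (hcomm : ∀ c, f' (e c) = e' (f c)) : profileOf f = profileOf f' := by
  unfold profileOf
  rw [← Multiset.map_univ_val_equiv e', Multiset.map_map]
  refine Multiset.map_congr rfl fun C _ => ?_
  refine Nat.card_congr (Equiv.subtypeEquiv e fun c => ?_)
  rw [hcomm]
  exact ⟨fun hh => by rw [hh], fun hh => e'.injective hh⟩

lemma univ_val_option {δ : Type*} [Fintype δ] :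
    (Finset.univ.val : Multiset (Option δ)) = none ::ₘ Finset.univ.val.map some := by
  refine (Multiset.Nodup.ext Finset.univ.nodup ?_).mpr fun o => ?_
  · exact Multiset.nodup_cons.mpr ⟨by simp, Finset.univ.nodup.map (Option.some_injective _)⟩
  · cases o <;> simp

lemma profileOf_optionMap {γ δ : Type*} [Fintype δ] (f : γ → δ) :
    profileOf (Option.map f) = 1 ::ₘ profileOf f := by
  unfold profileOf
  rw [univ_val_option, Multiset.map_cons, Multiset.map_map]
  congr 1
  · have e : {o : Option γ // Option.map f o = none} ≃ PUnit.{1} :=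
      { toFun := fun _ => PUnit.unit
        invFun := fun _ => ⟨none, rfl⟩
        left_inv := fun ⟨o, h⟩ => Subtype.ext (Option.map_eq_none_iff.mp h).symm
        right_inv := fun _ => rfl }
    rw [Nat.card_congr e]
    exact Nat.card_unique
  · refine Multiset.map_congr rfl fun C _ => ?_
    refine Nat.card_congr (Equiv.ofBijective
      (fun c : {c : γ // f c = C} => (⟨some c.1, by simp [c.2]⟩ :
        {o : Option γ // Option.map f o = some C})) ⟨?_, ?_⟩).symm
    · intro a b hab
      exact Subtype.ext (Option.some_injective _ (congrArg Subtype.val hab))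
    · rintro ⟨o, h⟩
      cases o with
      | none => simp at h
      | some c => exact ⟨⟨c, by simpa using h⟩, rfl⟩

lemma profileOf_elim {γ δ : Type*} [Fintype δ] [Finite γ] (f : γ → δ) (C : δ) :
    profileOf (fun o : Option γ => o.elim C f)
      = (Nat.card {c : γ // f c = C} + 1) ::ₘ
        (profileOf f).erase (Nat.card {c : γ // f c = C}) := by
  have hcard : ∀ D : δ, Nat.card {o : Option γ // o.elim C f = D}
      = Nat.card {c : γ // f c = D} + (if D = C then 1 else 0) := by
    intro D
    have e : {o : Option γ // o.elim C f = D} ≃ ({c : γ // f c = D} ⊕ PLift (D = C)) :=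
      { toFun := fun x => match x with
          | ⟨none, h⟩ => Sum.inr ⟨h.symm⟩
          | ⟨some c, h⟩ => Sum.inl ⟨c, h⟩
        invFun := fun x => match x with
          | Sum.inl c => ⟨some c.1, c.2⟩
          | Sum.inr p => ⟨none, p.down.symm⟩
        left_inv := fun x => by
          obtain ⟨o, h⟩ := x
          cases o <;> rfl
        right_inv := fun x => by
          cases x with
          | inl c => rfl
          | inr p => rfl }
    rw [Nat.card_congr e, Nat.card_sum]
    congr 1
    split_ifs with hDC
    · haveI : Nonempty (PLift (D = C)) := ⟨⟨hDC⟩⟩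
      haveI : Subsingleton (PLift (D = C)) := ⟨fun a b => by cases a; cases b; rfl⟩
      exact Nat.card_unique
    · haveI : IsEmpty (PLift (D = C)) := ⟨fun p => hDC p.down⟩
      exact Nat.card_of_isEmpty
  have hsplit : (Finset.univ.val : Multiset δ) = C ::ₘ Finset.univ.val.erase C :=
    (Multiset.cons_erase (Finset.mem_val.mpr (Finset.mem_univ C))).symm
  have h2 : (Finset.univ.val.erase C).map (fun D => Nat.card {c : γ // f c = D})
      = (profileOf f).erase (Nat.card {c : γ // f c = C}) := by
    unfold profileOf
    conv_rhs => rw [hsplit]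
    rw [Multiset.map_cons, Multiset.erase_cons_head]
  have hmain : profileOf (fun o : Option γ => o.elim C f)
      = (Nat.card {c : γ // f c = C} + 1) ::ₘ
        (Finset.univ.val.erase C).map (fun D => Nat.card {c : γ // f c = D}) := by
    unfold profileOf
    conv_lhs => rw [hsplit]
    simp only [Multiset.map_cons]
    congr 1
    · simpa using hcard C
    · refine Multiset.map_congr rfl fun D hD => ?_
      have hne : D ≠ C := (Finset.univ.nodup.mem_erase_iff.mp hD).1
      simpa [if_neg hne] using hcard D
  rw [hmain, h2]

lemma profileOf_sum {γ δ : Type*} [Fintype γ] [Fintype δ] (f : γ → δ) :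
    (profileOf f).sum = Nat.card γ := by
  unfold profileOf
  rw [Finset.sum_map_val]
  calc ∑ C : δ, Nat.card {c : γ // f c = C}
      = ∑ C : δ, Fintype.card {c : γ // f c = C} := by
        simp [Nat.card_eq_fintype_card]
    _ = Fintype.card (Σ C : δ, {c : γ // f c = C}) := Fintype.card_sigma.symm
    _ = Fintype.card γ := Fintype.card_congr (Equiv.sigmaFiberEquiv f)
    _ = Nat.card γ := Nat.card_eq_fintype_card.symm

lemma profileOf_pos {γ δ : Type*} [Finite γ] [Fintype δ] {f : γ → δ}
    (hf : Function.Surjective f) : ∀ x ∈ profileOf f, 1 ≤ x := by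
  intro x hx
  obtain ⟨C, _, rfl⟩ := Multiset.mem_map.mp hx
  obtain ⟨c, hc⟩ := hf C
  haveI : Nonempty {c : γ // f c = C} := ⟨⟨c, hc⟩⟩
  exact Nat.card_pos

/-! ### The merge profile as a fiber profile -/

variable {n : ℕ}

lemma mergeProfile_eq {ζ η : Setoid (Fin n)} (h : ζ ≤ η) :
    mergeProfile ζ η = profileOf (fmap h) := by
  unfold mergeProfile profileOf
  rw [Finset.image_univ_of_surjective Quotient.mk_surjective]
  refine Multiset.map_congr rfl fun C _ => ?_
  refine Nat.card_congr (Equiv.subtypeEquivRight fun c => ?_)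
  obtain ⟨x, rfl⟩ := Quotient.mk_surjective c
  rw [fmap_mk]
  have key : Quotient.mk η (Quotient.out (Quotient.mk ζ x)) = Quotient.mk η x :=
    Quotient.sound (Setoid.le_def.mp h (Quotient.exact (Quotient.out_eq (Quotient.mk ζ x))))
  rw [key]

/-! ### Extensions of a partition by one element -/

def clsMap (η : Setoid (Fin n)) (d : Option (Quotient η)) (x : Fin (n + 1)) :
    Option (Quotient η) :=
  Fin.lastCases d (fun i => some (Quotient.mk η i)) x

@[simp] lemma clsMap_castSucc (η : Setoid (Fin n)) (d : Option (Quotient η)) (i : Fin n) :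
    clsMap η d i.castSucc = some (Quotient.mk η i) := Fin.lastCases_castSucc ..

@[simp] lemma clsMap_last (η : Setoid (Fin n)) (d : Option (Quotient η)) :
    clsMap η d (Fin.last n) = d := Fin.lastCases_last ..

def extendS (η : Setoid (Fin n)) (d : Option (Quotient η)) : Setoid (Fin (n + 1)) :=
  Setoid.ker (clsMap η d)

lemma extendS_rel (η : Setoid (Fin n)) (d : Option (Quotient η)) (x y : Fin (n + 1)) :
    extendS η d x y ↔ clsMap η d x = clsMap η d y := Iff.rfl

@[simp] lemma projS_extendS (η : Setoid (Fin n)) (d : Option (Quotient η)) :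
    projS (extendS η d) = η := by
  apply Setoid.ext
  intro i j
  show extendS η d i.castSucc j.castSucc ↔ η i j
  rw [extendS_rel, clsMap_castSucc, clsMap_castSucc]
  exact ⟨fun h => Quotient.exact (Option.some_injective _ h),
    fun h => congrArg some (Quotient.sound h)⟩

lemma setoid_ext_fin (s t : Setoid (Fin (n + 1)))
    (h1 : ∀ i j : Fin n, s i.castSucc j.castSucc ↔ t i.castSucc j.castSucc)
    (h2 : ∀ j : Fin n, s j.castSucc (Fin.last n) ↔ t j.castSucc (Fin.last n)) : s = t := by
  apply Setoid.ext
  intro a b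
  induction a using Fin.lastCases with
  | last =>
    induction b using Fin.lastCases with
    | last => exact iff_of_true (s.refl _) (t.refl _)
    | cast j => exact ⟨fun h => t.symm ((h2 j).mp (s.symm h)),
        fun h => s.symm ((h2 j).mpr (t.symm h))⟩
  | cast i =>
    induction b using Fin.lastCases with
    | last => exact h2 i
    | cast j => exact h1 i j

lemma extendS_surj (η' : Setoid (Fin (n + 1))) (η : Setoid (Fin n)) (hp : projS η' = η) :
    ∃ d, extendS η d = η' := by
  have hrel : ∀ i j : Fin n, η i j ↔ η' i.castSucc j.castSucc := by
    intro i j; rw [← hp]; exact Iff.rfl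
  by_cases hl : ∃ j : Fin n, η' j.castSucc (Fin.last n)
  · obtain ⟨j0, hj0⟩ := hl
    refine ⟨some (Quotient.mk η j0), setoid_ext_fin _ _ ?_ ?_⟩
    · intro i j
      rw [extendS_rel, clsMap_castSucc, clsMap_castSucc, ← hrel i j]
      exact ⟨fun h => Quotient.exact (Option.some_injective _ h),
        fun h => congrArg some (Quotient.sound h)⟩
    · intro j
      rw [extendS_rel, clsMap_castSucc, clsMap_last]
      constructor
      · intro h
        have hj : η j j0 := Quotient.exact (Option.some_injective _ h)
        exact η'.trans ((hrel j j0).mp hj) hj0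
      · intro h
        have : η' j.castSucc j0.castSucc := η'.trans h (η'.symm hj0)
        exact congrArg some (Quotient.sound ((hrel j j0).mpr this))
  · refine ⟨none, setoid_ext_fin _ _ ?_ ?_⟩
    · intro i j
      rw [extendS_rel, clsMap_castSucc, clsMap_castSucc, ← hrel i j]
      exact ⟨fun h => Quotient.exact (Option.some_injective _ h),
        fun h => congrArg some (Quotient.sound h)⟩
    · intro j
      rw [extendS_rel, clsMap_castSucc, clsMap_last]
      constructor
      · intro h; exact absurd h (by simp)
      · intro h; exact absurd ⟨j, h⟩ hl

lemma extendS_injective (η : Setoid (Fin n)) : Function.Injective (extendS η) := by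
  have key : ∀ (d₁ d₂ : Option (Quotient η)), extendS η d₁ = extendS η d₂ →
      ∀ j : Fin n, d₁ = some (Quotient.mk η j) → d₂ = some (Quotient.mk η j) := by
    intro d₁ d₂ h12 j hj
    have h : extendS η d₁ (Fin.last n) j.castSucc := by
      rw [extendS_rel, clsMap_last, clsMap_castSucc, hj]
    rw [h12, extendS_rel, clsMap_last, clsMap_castSucc] at h
    exact h
  intro d d' hdd
  cases d with
  | none =>
    cases d' with
    | none => rfl
    | some C =>
      obtain ⟨j, rfl⟩ := Quotient.mk_surjective C
      exact absurd (key _ _ hdd.symm j rfl) (by simp)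
  | some C =>
    obtain ⟨j, rfl⟩ := Quotient.mk_surjective C
    exact (key _ _ hdd j rfl).symm

/-! ### Order lemmas for extensions -/

lemma clsMap_map {ζ η : Setoid (Fin n)} (h : ζ ≤ η) (c : Option (Quotient ζ))
    (x : Fin (n + 1)) :
    clsMap η (c.map (fmap h)) x = (clsMap ζ c x).map (fmap h) := by
  induction x using Fin.lastCases with
  | last => simp
  | cast i => simp

lemma extend_le {ζ η : Setoid (Fin n)} (h : ζ ≤ η) (c : Option (Quotient ζ)) :
    extendS ζ c ≤ extendS η (c.map (fmap h)) := by
  refine Setoid.le_def.mpr fun {x y} hxy => ?_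
  show clsMap η (c.map (fmap h)) x = clsMap η (c.map (fmap h)) y
  rw [clsMap_map, clsMap_map, show clsMap ζ c x = clsMap ζ c y from hxy]

lemma extend_le_some {ζ η : Setoid (Fin n)} (h : ζ ≤ η) (C : Quotient η) :
    extendS ζ none ≤ extendS η (some C) := by
  refine Setoid.le_def.mpr fun {x y} hxy => ?_
  have hxy' : clsMap ζ none x = clsMap ζ none y := hxy
  show clsMap η (some C) x = clsMap η (some C) y
  induction x using Fin.lastCases with
  | last =>
    induction y using Fin.lastCases with
    | last => rfl
    | cast j => simp at hxy'
  | cast i =>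
    induction y using Fin.lastCases with
    | last => simp at hxy'
    | cast j =>
      rw [clsMap_castSucc, clsMap_castSucc] at hxy' ⊢
      have hz : ζ i j := Quotient.exact (Option.some_injective _ hxy')
      exact congrArg some (Quotient.sound (Setoid.le_def.mp h hz))

lemma le_extend_forces {ζ η : Setoid (Fin n)} (hle : ζ ≤ η) (b : Quotient ζ)
    {d : Option (Quotient η)} (hl : extendS ζ (some b) ≤ extendS η d) :
    d = some (fmap hle b) := by
  have hrel : extendS ζ (some b) (Fin.last n) b.out.castSucc := by
    show clsMap ζ (some b) (Fin.last n) = clsMap ζ (some b) b.out.castSucc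
    rw [clsMap_last, clsMap_castSucc, Quotient.out_eq]
  have h2 := Setoid.le_def.mp hl hrel
  rw [extendS_rel, clsMap_last, clsMap_castSucc] at h2
  rw [h2]
  congr 1
  conv_rhs => rw [← Quotient.out_eq b, fmap_mk]

/-! ### Quotient equivalences for extensions -/

noncomputable def extQuotEquivSome (η : Setoid (Fin n)) (C : Quotient η) :
    Quotient (extendS η (some C)) ≃ Quotient η where
  toFun := Quotient.lift (fun x : Fin (n + 1) => Fin.lastCases C (fun i => Quotient.mk η i) x)
    (by
      have key : ∀ x, some (Fin.lastCases C (fun i => Quotient.mk η i) x)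
          = clsMap η (some C) x := by
        intro x
        induction x using Fin.lastCases with
        | last => simp
        | cast i => simp
      intro a b hab
      exact Option.some_injective _ (by rw [key, key]; exact hab))
  invFun := Quotient.lift (fun i : Fin n => Quotient.mk (extendS η (some C)) i.castSucc)
    (fun a b hab => Quotient.sound (show clsMap η (some C) a.castSucc
        = clsMap η (some C) b.castSucc by
      rw [clsMap_castSucc, clsMap_castSucc]
      exact congrArg some (Quotient.sound hab)))
  left_inv := by
    intro q
    induction q using Quotient.inductionOn with
    | h x =>
      induction x using Fin.lastCases with
      | last =>
        obtain ⟨j, rfl⟩ := Quotient.mk_surjective C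
        show Quotient.lift _ _ (Quotient.lift _ _ (Quotient.mk _ (Fin.last n))) = _
        rw [Quotient.lift_mk]
        rw [Fin.lastCases_last]
        show Quotient.mk _ j.castSucc = Quotient.mk _ (Fin.last n)
        refine Quotient.sound (show clsMap η _ j.castSucc = clsMap η _ (Fin.last n) from ?_)
        rw [clsMap_castSucc, clsMap_last]
      | cast i =>
        show Quotient.lift _ _ (Quotient.lift _ _ (Quotient.mk _ i.castSucc)) = _
        rw [Quotient.lift_mk, Fin.lastCases_castSucc, Quotient.lift_mk]
  right_inv := by
    intro q
    induction q using Quotient.inductionOn with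
    | h i =>
      show Quotient.lift _ _ (Quotient.lift _ _ (Quotient.mk _ i)) = _
      rw [Quotient.lift_mk, Quotient.lift_mk, Fin.lastCases_castSucc]

@[simp] lemma extQuotEquivSome_mk (η : Setoid (Fin n)) (C : Quotient η) (x : Fin (n + 1)) :
    extQuotEquivSome η C (Quotient.mk (extendS η (some C)) x)
      = Fin.lastCases C (fun i => Quotient.mk η i) x := rfl

noncomputable def extQuotEquivNone (η : Setoid (Fin n)) :
    Quotient (extendS η none) ≃ Option (Quotient η) where
  toFun := Quotient.lift (clsMap η none) (fun _ _ hab => hab)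
  invFun := fun o => o.elim (Quotient.mk (extendS η none) (Fin.last n))
    (Quotient.lift (fun i : Fin n => Quotient.mk (extendS η none) i.castSucc)
      (fun a b hab => Quotient.sound (show clsMap η none a.castSucc
          = clsMap η none b.castSucc by
        rw [clsMap_castSucc, clsMap_castSucc]
        exact congrArg some (Quotient.sound hab))))
  left_inv := by
    intro q
    induction q using Quotient.inductionOn with
    | h x =>
      induction x using Fin.lastCases with
      | last =>
        show Option.elim (clsMap η none (Fin.last n)) _ _ = _
        rw [clsMap_last]
        rfl
      | cast i =>
        show Option.elim (clsMap η none i.castSucc) _ _ = _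
        rw [clsMap_castSucc]
        rfl
  right_inv := by
    intro o
    cases o with
    | none =>
      show Quotient.lift _ _ (Quotient.mk _ (Fin.last n)) = none
      exact clsMap_last η none
    | some C =>
      obtain ⟨i, rfl⟩ := Quotient.mk_surjective C
      show clsMap η none i.castSucc = some (Quotient.mk η i)
      rw [clsMap_castSucc]

@[simp] lemma extQuotEquivNone_mk (η : Setoid (Fin n)) (x : Fin (n + 1)) :
    extQuotEquivNone η (Quotient.mk (extendS η none) x) = clsMap η none x := rfl

end ConsistencyAux
/-- **Schweinsberg's consistency criterion.** If the nonnegative rates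
`ρ(k; k₁,…,k_r)` (invariant under permutation of `k₁,…,k_r`, encoded as a multiset)
satisfy the consistency recursion
`ρ(k; k₁,…,k_r) = Σ_{i=1}^r ρ(k+1; k₁,…,k_i+1,…,k_r) + ρ(k+1; k₁,…,k_r, 1)`
for all `k ≥ 2` and all `k₁,…,k_r ≥ 1` summing to `k` with `max k_i ≥ 2`, then the
induced Markov chains on the partitions of `{1,…,n}` (where a transition merges `k₁`
blocks into one, `k₂` into another, etc., at rate `ρ`) form a projective family: the
rate of any transition `ζ → η` (`η ≠ ζ`) equals the total rate, started from any lift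
`ζ'` of `ζ` on `{1,…,n+1}`, of the transitions `ζ' → η'` whose restriction is `η`. -/
theorem consistency_recursion_implies_projective_rates
    (ρ : ℕ → Multiset ℕ → NNReal)
    (hrec : ∀ (k : ℕ), 2 ≤ k → ∀ m : Multiset ℕ,
      (∀ x ∈ m, 1 ≤ x) → m.sum = k → (∃ x ∈ m, 2 ≤ x) →
      ρ k m = (m.map fun ki => ρ (k + 1) ((ki + 1) ::ₘ m.erase ki)).sum
        + ρ (k + 1) (1 ::ₘ m)) :
    ∀ (n : ℕ) (ζ η : Setoid (Fin n)) (ζ' : Setoid (Fin (n + 1))),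
      ζ ≠ η → projS ζ' = ζ →
      mergeRate ρ ζ η = ∑ᶠ (η' : Setoid (Fin (n + 1))) (_ : projS η' = η),
        mergeRate ρ ζ' η' := by
  intro n ζ η ζ' hne hproj
  haveI hfin : Finite (Setoid (Fin (n + 1))) :=
    Finite.of_injective (fun s : Setoid (Fin (n + 1)) => (⇑s : Fin (n + 1) → Fin (n + 1) → Prop))
      fun s t hst => Setoid.eq_iff_rel_eq.mpr hst
  haveI := Fintype.ofFinite (Setoid (Fin (n + 1)))
  open ConsistencyAux in
  have hRHS : (∑ᶠ (η'' : Setoid (Fin (n + 1))) (_ : projS η'' = η), mergeRate ρ ζ' η'')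
      = ∑ d : Option (Quotient η), mergeRate ρ ζ' (ConsistencyAux.extendS η d) := by
    rw [finsum_eq_sum_of_fintype]
    rw [Finset.sum_congr rfl fun (η'' : Setoid (Fin (n + 1))) _ =>
      (finsum_eq_if (p := projS η'' = η) (x := mergeRate ρ ζ' η''))]
    rw [← Finset.sum_filter]
    refine (Finset.sum_bij
      (fun (d : Option (Quotient η)) (_ : d ∈ Finset.univ) => ConsistencyAux.extendS η d)
      ?_ ?_ ?_ ?_).symm
    · intro d _
      exact Finset.mem_filter.mpr ⟨Finset.mem_univ _, ConsistencyAux.projS_extendS η d⟩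
    · intro d1 _ d2 _ h
      exact ConsistencyAux.extendS_injective η h
    · intro η'' hη''
      obtain ⟨d, hd⟩ := ConsistencyAux.extendS_surj η'' η (Finset.mem_filter.mp hη'').2
      exact ⟨d, Finset.mem_univ _, hd⟩
    · intro d _
      rfl
  rw [hRHS]
  clear hRHS
  open ConsistencyAux in
  obtain ⟨c, rfl⟩ := ConsistencyAux.extendS_surj ζ' ζ hproj
  open ConsistencyAux in
  by_cases hle : ζ ≤ η
  case neg =>
    have hL : mergeRate ρ ζ η = 0 := by
      simp only [mergeRate]
      exact if_neg fun h => hle h.1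
    rw [hL]
    refine (Finset.sum_eq_zero fun d _ => ?_).symm
    simp only [mergeRate]
    refine if_neg ?_
    rintro ⟨hl, -⟩
    refine hle (Setoid.le_def.mpr fun {x y} hxy => ?_)
    have h1 : extendS ζ c x.castSucc y.castSucc := by
      rw [extendS_rel, clsMap_castSucc, clsMap_castSucc]
      exact congrArg some (Quotient.sound hxy)
    have h2 := Setoid.le_def.mp hl h1
    rw [extendS_rel, clsMap_castSucc, clsMap_castSucc] at h2
    exact Quotient.exact (Option.some_injective _ h2)
  case pos =>
  have hne' : ∀ d, extendS ζ c ≠ extendS η d := by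
    intro d hcon
    exact hne (by rw [← projS_extendS ζ c, hcon, projS_extendS])
  have hLHS : mergeRate ρ ζ η = ρ (Nat.card (Quotient ζ)) (mergeProfile ζ η) := by
    simp only [mergeRate]
    exact if_pos ⟨hle, hne⟩
  cases c with
  | some b =>
    rw [hLHS]
    rw [Finset.sum_eq_single (some (fmap hle b))
      (fun d _ hd => by
        simp only [mergeRate]
        refine if_neg ?_
        rintro ⟨hl, -⟩
        exact hd (le_extend_forces hle b hl))
      (fun h => absurd (Finset.mem_univ _) h)]
    have hlesome : extendS ζ (some b) ≤ extendS η (some (fmap hle b)) := by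
      have := extend_le hle (some b)
      simpa using this
    have hcard : Nat.card (Quotient (extendS ζ (some b))) = Nat.card (Quotient ζ) :=
      Nat.card_congr (extQuotEquivSome ζ b)
    have hprof : mergeProfile (extendS ζ (some b)) (extendS η (some (fmap hle b)))
        = mergeProfile ζ η := by
      rw [mergeProfile_eq hlesome, mergeProfile_eq hle]
      refine profileOf_congr _ _ (extQuotEquivSome ζ b) (extQuotEquivSome η (fmap hle b))
        fun q => ?_
      induction q using Quotient.inductionOn with
      | h x =>
        induction x using Fin.lastCases with
        | last => simp
        | cast i => simp
    simp only [mergeRate]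
    rw [if_pos ⟨hlesome, hne' _⟩, hcard, hprof]
  | none =>
    have hnontriv : ∃ x y : Fin n, η x y ∧ ¬ ζ x y := by
      have hnle : ¬ ∀ x y : Fin n, η x y → ζ x y := fun hf =>
        hne (le_antisymm hle (Setoid.le_def.mpr fun {x y} => hf x y))
      push_neg at hnle
      exact hnle
    obtain ⟨x0, y0, hxy0, hnxy0⟩ := hnontriv
    have hmkne : Quotient.mk ζ x0 ≠ Quotient.mk ζ y0 := fun hcon => hnxy0 (Quotient.exact hcon)
    have hk2 : 2 ≤ Nat.card (Quotient ζ) := by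
      haveI : Nontrivial (Quotient ζ) := ⟨_, _, hmkne⟩
      exact Finite.one_lt_card_iff_nontrivial.mpr ‹_›
    have hmprof : mergeProfile ζ η = profileOf (fmap hle) := mergeProfile_eq hle
    have hmpos : ∀ x ∈ mergeProfile ζ η, 1 ≤ x := by
      rw [hmprof]; exact profileOf_pos (fmap_surjective hle)
    have hmsum : (mergeProfile ζ η).sum = Nat.card (Quotient ζ) := by
      rw [hmprof]; exact profileOf_sum _
    have hmtwo : ∃ x ∈ mergeProfile ζ η, 2 ≤ x := by
      refine ⟨Nat.card {c : Quotient ζ // fmap hle c = Quotient.mk η x0}, ?_, ?_⟩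
      · rw [hmprof]
        exact Multiset.mem_map_of_mem _ (Finset.mem_val.mpr (Finset.mem_univ _))
      · haveI : Nontrivial {c : Quotient ζ // fmap hle c = Quotient.mk η x0} := by
          refine ⟨⟨⟨Quotient.mk ζ x0, by simp⟩, ⟨Quotient.mk ζ y0, ?_⟩, ?_⟩⟩
          · rw [fmap_mk]
            exact Quotient.sound (η.symm hxy0)
          · intro hcon
            exact hmkne (Subtype.ext_iff.mp hcon)
        exact Finite.one_lt_card_iff_nontrivial.mpr ‹_›
    have hk' : Nat.card (Quotient (extendS ζ none)) = Nat.card (Quotient ζ) + 1 := by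
      rw [Nat.card_congr (extQuotEquivNone ζ)]
      rw [Nat.card_eq_fintype_card, Nat.card_eq_fintype_card, Fintype.card_option]
    have hlenone : extendS ζ none ≤ extendS η none := by
      have := extend_le hle none
      simpa using this
    have hterm_none : mergeRate ρ (extendS ζ none) (extendS η none)
        = ρ (Nat.card (Quotient ζ) + 1) (1 ::ₘ mergeProfile ζ η) := by
      simp only [mergeRate]
      rw [if_pos ⟨hlenone, hne' none⟩, hk']
      congr 1
      rw [mergeProfile_eq hlenone, hmprof]
      rw [profileOf_congr (fmap hlenone) (Option.map (fmap hle))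
        (extQuotEquivNone ζ) (extQuotEquivNone η) (fun q => ?_)]
      · exact profileOf_optionMap (fmap hle)
      · induction q using Quotient.inductionOn with
        | h x =>
          induction x using Fin.lastCases with
          | last => simp
          | cast i => simp
    have hterm_some : ∀ C : Quotient η,
        mergeRate ρ (extendS ζ none) (extendS η (some C))
          = ρ (Nat.card (Quotient ζ) + 1)
              ((Nat.card {c : Quotient ζ // fmap hle c = C} + 1) ::ₘ
                (mergeProfile ζ η).erase (Nat.card {c : Quotient ζ // fmap hle c = C})) := by
      intro C
      simp only [mergeRate]
      rw [if_pos ⟨extend_le_some hle C, hne' (some C)⟩, hk']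
      congr 1
      rw [mergeProfile_eq (extend_le_some hle C), hmprof]
      rw [profileOf_congr (fmap (extend_le_some hle C))
        (fun o : Option (Quotient ζ) => o.elim C (fmap hle))
        (extQuotEquivNone ζ) (extQuotEquivSome η C) (fun q => ?_)]
      · exact profileOf_elim (fmap hle) C
      · induction q using Quotient.inductionOn with
        | h x =>
          induction x using Fin.lastCases with
          | last => simp
          | cast i => simp
    rw [hLHS, hrec (Nat.card (Quotient ζ)) hk2 (mergeProfile ζ η) hmpos hmsum hmtwo]
    rw [Fintype.sum_option, hterm_none,
      Finset.sum_congr rfl (fun C _ => hterm_some C), add_comm]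
    congr 1
    conv_lhs => rw [hmprof]
    conv_lhs => rw [ConsistencyAux.profileOf, Multiset.map_map]
    rw [Finset.sum_map_val]
    refine Finset.sum_congr rfl fun C _ => ?_
    simp only [Function.comp]
    rw [hmprof]
    rfl
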